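/- Let G be a simple graph on n ≥ 1 vertices with m edges and clique number ω = ω(G), let E_k = (1/2)E_{i_k j_k} + (1/2)E_{j_k i_k} for the k-th edge {i_k,j_k} of G, and for a positive integer ℓ define T_ℓ := max over unit vectors u, v ∈ ℝ^n and w ∈ ℝ^{ℓ+2m} of Σ_{i=1}^{ℓ} (u^T (ℓ^{−1} I) v) w_i + Σ_{k=1}^{m} (u^T E_k v) w_{ℓ+k} + Σ_{k=1}^{m} (u^T E_k v) w_{ℓ+m+k}. Then T_ℓ = 1 if and only if ℓ = ω; T_ℓ > 1 if and only if ℓ < ω; and T_ℓ < 1 if and only if ℓ > ω. -/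

import Mathlib

open Matrix Finset

namespace Stmt9Aux

variable {n m : ℕ}

/-- the embedding of the doubled edge list into ordered pairs -/
def phi (a b : Fin m → Fin n) : Fin m ⊕ Fin m → Fin n × Fin n :=
  Sum.elim (fun k => (a k, b k)) (fun k => (b k, a k))

lemma phi_inj {G : SimpleGraph (Fin n)} {a b : Fin m → Fin n}
    (hab : ∀ k, G.Adj (a k) (b k))
    (hinj : Function.Injective fun k => s(a k, b k)) :
    Function.Injective (phi a b) := by
  have key : ∀ k k' : Fin m, a k = b k' → b k = a k' → False := by
    intro k k' h1 h2
    have hs : s(a k, b k) = s(a k', b k') := by rw [h1, h2, Sym2.eq_swap]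
    have hkk : k = k' := hinj hs
    subst hkk
    exact (hab k).ne h1
  intro p q hpq
  cases p with
  | inl k =>
    cases q with
    | inl k' =>
      simp only [phi, Sum.elim_inl, Prod.mk.injEq] at hpq
      have : s(a k, b k) = s(a k', b k') := by rw [hpq.1, hpq.2]
      exact congrArg Sum.inl (hinj this)
    | inr k' =>
      simp only [phi, Sum.elim_inl, Sum.elim_inr, Prod.mk.injEq] at hpq
      exact (key k k' hpq.1 hpq.2).elim
  | inr k =>
    cases q with
    | inl k' =>
      simp only [phi, Sum.elim_inl, Sum.elim_inr, Prod.mk.injEq] at hpq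
      exact (key k k' hpq.2 hpq.1).elim
    | inr k' =>
      simp only [phi, Sum.elim_inr, Prod.mk.injEq] at hpq
      have : s(a k, b k) = s(a k', b k') := by rw [hpq.2, hpq.1]
      exact congrArg Sum.inr (hinj this)

lemma sum_phi {a b : Fin m → Fin n} (hφ : Function.Injective (phi a b))
    (f : Fin n × Fin n → ℝ) :
    ∑ p ∈ Finset.univ.image (phi a b), f p
      = (∑ k, f (a k, b k)) + ∑ k, f (b k, a k) := by
  rw [Finset.sum_image (fun x _ y _ h => hφ h)]
  rw [Fintype.sum_sum_type]
  simp [phi]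

lemma offDiag_sum_aux (K : Finset (Fin n)) (x : Fin n → ℝ) :
    ∑ p ∈ K.offDiag, x p.1 * x p.2
      = (∑ i ∈ K, x i) * (∑ i ∈ K, x i) - ∑ i ∈ K, x i * x i := by
  have h1 : ∑ p ∈ K ×ˢ K, x p.1 * x p.2 = (∑ i ∈ K, x i) * (∑ i ∈ K, x i) := by
    rw [Finset.sum_product, Finset.sum_mul_sum]
  rw [← Finset.diag_union_offDiag K,
    Finset.sum_union (Finset.disjoint_diag_offDiag _), Finset.sum_diag] at h1
  linarith

/-- support of a vector -/
noncomputable def suppF (x : Fin n → ℝ) : Finset (Fin n) := Finset.univ.filter (fun i => x i ≠ 0)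

/-- the "neighborhood sum" at a vertex -/
def Sfun (a b : Fin m → Fin n) (x : Fin n → ℝ) (p : Fin n) : ℝ :=
  ∑ k, ((if a k = p then x (b k) else 0) + (if b k = p then x (a k) else 0))

lemma shift {G : SimpleGraph (Fin n)} {a b : Fin m → Fin n}
    (hab : ∀ k, G.Adj (a k) (b k))
    (x : Fin n → ℝ) (hx0 : ∀ p, 0 ≤ x p) (hsum : ∑ p, x p = 1)
    (i j : Fin n) (hij : i ≠ j) (hnadj : ¬ G.Adj i j)
    (hxi : x i ≠ 0) (hxj : x j ≠ 0)
    (hS : Sfun a b x j ≤ Sfun a b x i) :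
    ∃ x' : Fin n → ℝ, (∀ p, 0 ≤ x' p) ∧ (∑ p, x' p = 1) ∧
      suppF x' ⊆ (suppF x).erase j ∧
      ∑ k, x (a k) * x (b k) ≤ ∑ k, x' (a k) * x' (b k) := by
  set x' : Fin n → ℝ := fun p => if p = i then x i + x j else if p = j then 0 else x p with hx'
  have hx'i : x' i = x i + x j := by simp [hx']
  have hx'j : x' j = 0 := by simp [hx', Ne.symm hij]
  have hx'other : ∀ p, p ≠ i → p ≠ j → x' p = x p := by
    intro p h1 h2; simp [hx', h1, h2]
  refine ⟨x', ?_, ?_, ?_, ?_⟩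
  · intro p
    by_cases h1 : p = i
    · subst h1; rw [hx'i]; exact add_nonneg (hx0 _) (hx0 _)
    · by_cases h2 : p = j
      · subst h2; rw [hx'j]
      · rw [hx'other p h1 h2]; exact hx0 p
  · have hpt : ∀ p, x' p = x p + ((if p = i then x j else 0) - (if p = j then x j else 0)) := by
      intro p
      by_cases h1 : p = i
      · subst h1; simp [hx'i, hij]
      · by_cases h2 : p = j
        · subst h2; simp [hx'j, h1]
        · simp [hx'other p h1 h2, h1, h2]
    rw [Finset.sum_congr rfl (fun p _ => hpt p), Finset.sum_add_distrib,
      Finset.sum_sub_distrib]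
    simp [Finset.sum_ite_eq', hsum]
  · intro p hp
    simp only [suppF, Finset.mem_filter, Finset.mem_univ, true_and] at hp
    rw [Finset.mem_erase]
    by_cases h1 : p = i
    · subst h1; exact ⟨hij, by simpa [suppF] using hxi⟩
    · by_cases h2 : p = j
      · exact absurd (h2 ▸ hx'j) hp
      · refine ⟨h2, ?_⟩
        simp only [suppF, Finset.mem_filter, Finset.mem_univ, true_and]
        rwa [hx'other p h1 h2] at hp
  · have key : ∀ k, x' (a k) * x' (b k) = x (a k) * x (b k)
        + x j * (((if a k = i then x (b k) else 0) + (if b k = i then x (a k) else 0))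
          - ((if a k = j then x (b k) else 0) + (if b k = j then x (a k) else 0))) := by
      intro k
      have hne : a k ≠ b k := (hab k).ne
      have h1 : ¬(a k = i ∧ b k = j) := by
        rintro ⟨h, h'⟩; exact hnadj (h ▸ h' ▸ hab k)
      have h2 : ¬(a k = j ∧ b k = i) := by
        rintro ⟨h, h'⟩; exact hnadj (G.adj_symm (h ▸ h' ▸ hab k))
      by_cases hai : a k = i
      · have haj : a k ≠ j := fun h => hij (hai ▸ h ▸ rfl)
        have hbi : b k ≠ i := fun h => hne (hai.trans h.symm)
        have hbj : b k ≠ j := fun h => h1 ⟨hai, h⟩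
        rw [hai, hx'i, hx'other _ hbi hbj]
        simp [hai, haj, hbi, hbj, hij, Ne.symm hij]
        try ring
      · by_cases haj : a k = j
        · have hbi : b k ≠ i := fun h => h2 ⟨haj, h⟩
          have hbj : b k ≠ j := fun h => hne (haj.trans h.symm)
          rw [haj, hx'j, hx'other _ hbi hbj]
          simp [hai, haj, hbi, hbj, hij, Ne.symm hij]
          try ring
        · by_cases hbi : b k = i
          · have hbj : b k ≠ j := fun h => hij (hbi ▸ h ▸ rfl)
            rw [hbi, hx'i, hx'other _ hai haj]
            simp [hai, haj, hbi, hbj, hij, Ne.symm hij]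
            try ring
          · by_cases hbj : b k = j
            · rw [hbj, hx'j, hx'other _ hai haj]
              simp [hai, haj, hbi, hbj, hij, Ne.symm hij]
              try ring
            · rw [hx'other _ hai haj, hx'other _ hbi hbj]
              simp [hai, haj, hbi, hbj]
    have hsum' : ∑ k, x' (a k) * x' (b k)
        = (∑ k, x (a k) * x (b k)) + x j * (Sfun a b x i - Sfun a b x j) := by
      rw [Finset.sum_congr rfl (fun k _ => key k), Finset.sum_add_distrib,
        ← Finset.mul_sum, Finset.sum_sub_distrib]
      simp only [Sfun]
    have : 0 ≤ x j * (Sfun a b x i - Sfun a b x j) :=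
      mul_nonneg (hx0 j) (sub_nonneg.2 hS)
    linarith

lemma ms (G : SimpleGraph (Fin n)) [DecidableRel G.Adj] (a b : Fin m → Fin n)
    (hab : ∀ k, G.Adj (a k) (b k))
    (hinj : Function.Injective fun k => s(a k, b k)) :
    ∀ N : ℕ, ∀ x : Fin n → ℝ, (suppF x).card ≤ N → (∀ i, 0 ≤ x i) → (∑ i, x i) = 1 →
      2 * ∑ k, x (a k) * x (b k) ≤ 1 - 1 / (G.cliqueNum : ℝ) := by
  have hφ : Function.Injective (phi a b) := phi_inj hab hinj
  intro N
  induction N with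
  | zero =>
    intro x hcard hx0 hsum
    exfalso
    have hempty : suppF x = ∅ := Finset.card_eq_zero.1 (Nat.le_zero.1 hcard)
    have : ∀ i, x i = 0 := by
      intro i
      by_contra h
      have : i ∈ suppF x := by simp [suppF, h]
      simp [hempty] at this
    rw [Finset.sum_congr rfl (fun i _ => this i)] at hsum
    simp at hsum
  | succ N ih =>
    intro x hcard hx0 hsum
    by_cases hcl : ∀ p ∈ suppF x, ∀ q ∈ suppF x, p ≠ q → G.Adj p q
    · -- support is a clique
      have hne : (suppF x).Nonempty := by
        rcases Finset.eq_empty_or_nonempty (suppF x) with h | h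
        · exfalso
          have : ∀ i, x i = 0 := by
            intro i; by_contra hh
            have : i ∈ suppF x := by simp [suppF, hh]
            simp [h] at this
          rw [Finset.sum_congr rfl (fun i _ => this i)] at hsum
          simp at hsum
        · exact h
      have hclique : G.IsClique (suppF x : Set (Fin n)) := by
        intro p hp q hq hpq
        exact hcl p (by exact_mod_cast hp) q (by exact_mod_cast hq) hpq
      have hcardω : (suppF x).card ≤ G.cliqueNum :=
        SimpleGraph.IsClique.card_le_cliqueNum (tc := hclique)
      have hcpos : 0 < (suppF x).card := Finset.card_pos.2 hne
      have hωpos : 0 < G.cliqueNum := lt_of_lt_of_le hcpos hcardω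
      have hs1 : ∑ i ∈ suppF x, x i = 1 := by
        rw [suppF, Finset.sum_filter_ne_zero]; exact hsum
      have hCS : (1:ℝ) ≤ ((suppF x).card : ℝ) * ∑ i ∈ suppF x, x i ^ 2 := by
        have h := sq_sum_le_card_mul_sum_sq (s := suppF x) (f := x)
        rw [hs1] at h
        simpa using h
      have hsub : ∑ i ∈ suppF x, x i ^ 2 ≤ ∑ i, x i ^ 2 :=
        Finset.sum_le_sum_of_subset_of_nonneg (Finset.subset_univ _)
          (fun i _ _ => sq_nonneg _)
      have hsq : 1 / (G.cliqueNum : ℝ) ≤ ∑ i, x i ^ 2 := by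
        have hωR : (0:ℝ) < (G.cliqueNum : ℝ) := by exact_mod_cast hωpos
        have hcR : (0:ℝ) < ((suppF x).card : ℝ) := by exact_mod_cast hcpos
        have hcω : ((suppF x).card : ℝ) ≤ (G.cliqueNum : ℝ) := by exact_mod_cast hcardω
        rw [div_le_iff₀ hωR]
        calc (1:ℝ) ≤ ((suppF x).card : ℝ) * ∑ i ∈ suppF x, x i ^ 2 := hCS
          _ ≤ ((suppF x).card : ℝ) * ∑ i, x i ^ 2 := by
              apply mul_le_mul_of_nonneg_left hsub hcR.le
          _ ≤ (∑ i, x i ^ 2) * (G.cliqueNum : ℝ) := by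
              rw [mul_comm]
              apply mul_le_mul_of_nonneg_left hcω
              positivity
      have h2f : (∑ k, x (a k) * x (b k)) + ∑ k, x (b k) * x (a k)
          ≤ ∑ p ∈ Finset.univ.offDiag, x p.1 * x p.2 := by
        rw [← sum_phi hφ (fun p => x p.1 * x p.2)]
        apply Finset.sum_le_sum_of_subset_of_nonneg
        · intro p hp
          rcases Finset.mem_image.1 hp with ⟨jj, _, rfl⟩
          cases jj with
          | inl k => simp [phi, Finset.mem_offDiag, (hab k).ne]
          | inr k => simp [phi, Finset.mem_offDiag, (hab k).ne']
        · intro p _ _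
          exact mul_nonneg (hx0 _) (hx0 _)
      rw [offDiag_sum_aux] at h2f
      have hc : ∑ k, x (b k) * x (a k) = ∑ k, x (a k) * x (b k) := by
        apply Finset.sum_congr rfl; intros; ring
      have hxx : ∑ i, x i * x i = ∑ i, x i ^ 2 := by
        apply Finset.sum_congr rfl; intros; ring
      rw [hc, hsum, hxx] at h2f
      linarith
    · push_neg at hcl
      obtain ⟨p, hp, q, hq, hpq, hnadj⟩ := hcl
      simp only [suppF, Finset.mem_filter, Finset.mem_univ, true_and] at hp hq
      have step : ∀ i j : Fin n, i ≠ j → ¬ G.Adj i j → x i ≠ 0 → x j ≠ 0 →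
          Sfun a b x j ≤ Sfun a b x i →
          2 * ∑ k, x (a k) * x (b k) ≤ 1 - 1 / (G.cliqueNum : ℝ) := by
        intro i j hij hnadj' hxi hxj hS
        obtain ⟨x', h0, h1, hss, hle⟩ := shift hab x hx0 hsum i j hij hnadj' hxi hxj hS
        have hj : j ∈ suppF x := by simp [suppF, hxj]
        have hcard' : (suppF x').card ≤ N := by
          calc (suppF x').card ≤ ((suppF x).erase j).card := Finset.card_le_card hss
            _ = (suppF x).card - 1 := Finset.card_erase_of_mem hj
            _ ≤ N := by omega
        have := ih x' hcard' h0 h1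
        linarith
      rcases le_total (Sfun a b x q) (Sfun a b x p) with h | h
      · exact step p q hpq hnadj hp hq h
      · exact step q p hpq.symm (fun hh => hnadj (G.adj_symm hh)) hq hp h

end Stmt9Aux

open Stmt9Aux in
/-- the maximum `T_ℓ` of the trilinear form satisfies
`T_ℓ = 1 ↔ ℓ = ω`, `T_ℓ > 1 ↔ ℓ < ω` and `T_ℓ < 1 ↔ ℓ > ω`, where `ω` is the
clique number of `G`. -/
theorem stmt_9 (n m : ℕ) (hn : 1 ≤ n) (G : SimpleGraph (Fin n)) [DecidableRel G.Adj]
    (a b : Fin m → Fin n)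
    (hab : ∀ k, G.Adj (a k) (b k))
    (hinj : Function.Injective fun k => s(a k, b k))
    (hsurj : ∀ e ∈ G.edgeFinset, ∃ k, s(a k, b k) = e)
    (E : Fin m → Matrix (Fin n) (Fin n) ℝ)
    (hE : ∀ k, E k = (1/2 : ℝ) • Matrix.single (a k) (b k) 1
                   + (1/2 : ℝ) • Matrix.single (b k) (a k) 1)
    (ℓ : ℕ) (hℓ : 0 < ℓ) :
    ∃ T : ℝ,
      IsGreatest
        {y : ℝ | ∃ (u v : Fin n → ℝ) (w : Fin ℓ ⊕ Fin m ⊕ Fin m → ℝ),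
          (∑ i, u i ^ 2) = 1 ∧ (∑ i, v i ^ 2) = 1 ∧ (∑ i, w i ^ 2) = 1 ∧
          y = (∑ i : Fin ℓ,
                (u ⬝ᵥ ((ℓ : ℝ)⁻¹ • (1 : Matrix (Fin n) (Fin n) ℝ)).mulVec v)
                  * w (Sum.inl i))
            + (∑ k, (u ⬝ᵥ (E k).mulVec v) * w (Sum.inr (Sum.inl k)))
            + (∑ k, (u ⬝ᵥ (E k).mulVec v) * w (Sum.inr (Sum.inr k)))} T ∧
      (T = 1 ↔ ℓ = G.cliqueNum) ∧
      (1 < T ↔ ℓ < G.cliqueNum) ∧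
      (T < 1 ↔ G.cliqueNum < ℓ) := by
  classical
  have hφ : Function.Injective (phi a b) := phi_inj hab hinj
  obtain ⟨K, hKcl, hKcard⟩ := G.exists_isNClique_cliqueNum
  have hω1 : 1 ≤ G.cliqueNum := by
    have hcl : G.IsClique ({(⟨0, hn⟩ : Fin n)} : Finset (Fin n)) := by
      simp [SimpleGraph.isClique_iff, Set.pairwise_singleton]
    have h := SimpleGraph.IsClique.card_le_cliqueNum (tc := hcl)
    simpa using h
  have hωR : (0:ℝ) < (G.cliqueNum : ℝ) := by exact_mod_cast hω1
  have hℓR : (0:ℝ) < (ℓ : ℝ) := by exact_mod_cast hℓ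
  have hωle1 : 1 / (G.cliqueNum:ℝ) ≤ 1 := by
    rw [div_le_one hωR]; exact_mod_cast hω1
  set R : ℝ := 1/(ℓ:ℝ) + (1 - 1/(G.cliqueNum:ℝ)) with hRdef
  have hRpos : 0 < R := by
    have h1 : 0 < 1/(ℓ:ℝ) := by positivity
    rw [hRdef]; linarith
  have hβ : ∀ (u v : Fin n → ℝ) (k : Fin m),
      u ⬝ᵥ (E k).mulVec v = (u (a k) * v (b k) + u (b k) * v (a k)) / 2 := by
    intro u v k
    have hupd : ∀ (p : Fin n) (c : ℝ),
        u ⬝ᵥ Function.update (0 : Fin n → ℝ) p c = u p * c := by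
      intro p c
      simp [dotProduct, Function.update]
    rw [hE k, Matrix.add_mulVec, Matrix.smul_mulVec, Matrix.smul_mulVec,
      Matrix.single_mulVec, Matrix.single_mulVec,
      dotProduct_add, dotProduct_smul, dotProduct_smul, hupd, hupd]
    simp [smul_eq_mul]; ring
  have hα : ∀ (u v : Fin n → ℝ),
      u ⬝ᵥ ((ℓ : ℝ)⁻¹ • (1 : Matrix (Fin n) (Fin n) ℝ)).mulVec v
        = (ℓ:ℝ)⁻¹ * (u ⬝ᵥ v) := by
    intro u v
    rw [Matrix.smul_mulVec, Matrix.one_mulVec, dotProduct_smul, smul_eq_mul]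
  set cfun : (Fin n → ℝ) → (Fin n → ℝ) → (Fin ℓ ⊕ Fin m ⊕ Fin m) → ℝ :=
    fun u v => Sum.elim (fun _ => (ℓ:ℝ)⁻¹ * (u ⬝ᵥ v))
      (Sum.elim (fun k => u ⬝ᵥ (E k).mulVec v) (fun k => u ⬝ᵥ (E k).mulVec v))
    with hcfun
  have hexpr : ∀ (u v : Fin n → ℝ) (w : Fin ℓ ⊕ Fin m ⊕ Fin m → ℝ),
      ((∑ i : Fin ℓ,
          (u ⬝ᵥ ((ℓ : ℝ)⁻¹ • (1 : Matrix (Fin n) (Fin n) ℝ)).mulVec v)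
            * w (Sum.inl i))
        + (∑ k, (u ⬝ᵥ (E k).mulVec v) * w (Sum.inr (Sum.inl k)))
        + (∑ k, (u ⬝ᵥ (E k).mulVec v) * w (Sum.inr (Sum.inr k))))
      = ∑ j, cfun u v j * w j := by
    intro u v w
    rw [Fintype.sum_sum_type]
    rw [Fintype.sum_sum_type]
    simp only [hcfun, Sum.elim_inl, Sum.elim_inr, hα]
    ring
  have hc2split : ∀ (u v : Fin n → ℝ),
      ∑ j, cfun u v j ^ 2
        = (ℓ:ℝ) * ((ℓ:ℝ)⁻¹ * (u ⬝ᵥ v))^2 + 2 * ∑ k, (u ⬝ᵥ (E k).mulVec v)^2 := by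
    intro u v
    rw [Fintype.sum_sum_type, Fintype.sum_sum_type]
    simp only [hcfun, Sum.elim_inl, Sum.elim_inr, Finset.sum_const, Finset.card_univ,
      Fintype.card_fin, nsmul_eq_mul]
    ring
  refine ⟨Real.sqrt R, ⟨?_, ?_⟩, ?_, ?_, ?_⟩
  · -- membership : the maximum is attained
    set s0 : ℝ := (Real.sqrt (G.cliqueNum : ℝ))⁻¹ with hs0
    set u : Fin n → ℝ := fun p => if p ∈ K then s0 else 0 with hudef
    have hs0sq : s0^2 = 1/(G.cliqueNum:ℝ) := by
      rw [hs0, inv_pow, Real.sq_sqrt hωR.le, one_div]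
    have huval : ∀ p, u p ^ 2 = if p ∈ K then 1/(G.cliqueNum:ℝ) else 0 := by
      intro p; by_cases h : p ∈ K <;> simp [hudef, h, hs0sq]
    have husq : ∑ p, u p ^ 2 = 1 := by
      rw [Finset.sum_congr rfl (fun p _ => huval p), Finset.sum_ite_mem,
        Finset.univ_inter, Finset.sum_const, hKcard, nsmul_eq_mul]
      field_simp
    have huv : u ⬝ᵥ u = 1 := by
      have h : u ⬝ᵥ u = ∑ p, u p ^2 := by
        simp [dotProduct, sq]
      rw [h, husq]
    set z : Fin n → ℝ := fun p => u p ^ 2 with hzdef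
    have hz0 : ∀ p, 0 ≤ z p := fun p => sq_nonneg _
    have hz1 : ∑ p, z p = 1 := husq
    have hoff : ∑ p ∈ K.offDiag, z p.1 * z p.2 = 1 - 1/(G.cliqueNum:ℝ) := by
      rw [offDiag_sum_aux]
      have hzv : ∀ p ∈ K, z p = 1/(G.cliqueNum:ℝ) :=
        fun p hp => (huval p).trans (if_pos hp)
      have h1 : ∑ i ∈ K, z i = 1 := by
        rw [Finset.sum_congr rfl hzv, Finset.sum_const, hKcard, nsmul_eq_mul]
        field_simp
      have h2 : ∑ i ∈ K, z i * z i = 1/(G.cliqueNum:ℝ) := by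
        have hzv2 : ∀ p ∈ K, z p * z p = 1/(G.cliqueNum:ℝ) * (1/(G.cliqueNum:ℝ)) :=
          fun p hp => by rw [hzv p hp]
        rw [Finset.sum_congr rfl hzv2, Finset.sum_const, hKcard, nsmul_eq_mul]
        field_simp
      rw [h1, h2]; ring
    have hlow : 1 - 1/(G.cliqueNum:ℝ) ≤ 2 * ∑ k, z (a k) * z (b k) := by
      have hsub : K.offDiag ⊆ Finset.univ.image (phi a b) := by
        intro p hp
        rw [Finset.mem_offDiag] at hp
        obtain ⟨hp1, hp2, hp12⟩ := hp
        have hadj : G.Adj p.1 p.2 := hKcl (by exact_mod_cast hp1) (by exact_mod_cast hp2) hp12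
        have hmem : s(p.1, p.2) ∈ G.edgeFinset := by
          rw [SimpleGraph.mem_edgeFinset]; exact hadj
        obtain ⟨k, hk⟩ := hsurj _ hmem
        rw [Sym2.eq_iff] at hk
        rcases hk with ⟨h1, h2⟩ | ⟨h1, h2⟩
        · exact Finset.mem_image.2 ⟨Sum.inl k, Finset.mem_univ _,
            by simp [phi, h1, h2]⟩
        · exact Finset.mem_image.2 ⟨Sum.inr k, Finset.mem_univ _,
            by simp [phi, h1, h2]⟩
      have h := Finset.sum_le_sum_of_subset_of_nonneg (f := fun p => z p.1 * z p.2) hsub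
        (fun p _ _ => mul_nonneg (hz0 _) (hz0 _))
      rw [sum_phi hφ (fun p => z p.1 * z p.2)] at h
      have hc : ∑ k, z (b k) * z (a k) = ∑ k, z (a k) * z (b k) :=
        Finset.sum_congr rfl fun _ _ => mul_comm _ _
      simp only at h hc
      rw [hoff] at h
      linarith
    have hup := ms G a b hab hinj (suppF z).card z le_rfl hz0 hz1
    have hzeq : 2 * ∑ k, z (a k) * z (b k) = 1 - 1/(G.cliqueNum:ℝ) :=
      le_antisymm hup hlow
    have hβsq : ∀ k, (u ⬝ᵥ (E k).mulVec u)^2 = z (a k) * z (b k) := by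
      intro k
      rw [hβ u u k, hzdef]
      ring
    have hc2 : ∑ j, cfun u u j ^ 2 = R := by
      rw [hc2split u u, huv, Finset.sum_congr rfl (fun k _ => hβsq k), hzeq, hRdef]
      field_simp
      try ring
    set w : Fin ℓ ⊕ Fin m ⊕ Fin m → ℝ := fun j => cfun u u j / Real.sqrt R with hwdef
    have hw2 : ∑ j, w j ^ 2 = 1 := by
      have hpt : ∀ j, w j ^ 2 = cfun u u j ^ 2 / R := by
        intro j
        simp only [hwdef]
        rw [div_pow, Real.sq_sqrt hRpos.le]
      rw [Finset.sum_congr rfl fun j _ => hpt j, ← Finset.sum_div, hc2,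
        div_self hRpos.ne']
    refine ⟨u, u, w, husq, husq, hw2, ?_⟩
    rw [hexpr u u w]
    have h : ∑ j, cfun u u j * w j = (∑ j, cfun u u j ^2) / Real.sqrt R := by
      rw [Finset.sum_div]
      refine Finset.sum_congr rfl fun j _ => ?_
      simp only [hwdef]
      ring
    rw [h, hc2, Real.div_sqrt]
  · -- upper bound
    rintro y ⟨u, v, w, hu, hv, hw, rfl⟩
    rw [hexpr u v w]
    have hCS := Finset.sum_mul_sq_le_sq_mul_sq Finset.univ (cfun u v) w
    rw [hw, mul_one] at hCS
    have hd2 : (u ⬝ᵥ v)^2 ≤ 1 := by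
      have h := Finset.sum_mul_sq_le_sq_mul_sq Finset.univ u v
      rw [hu, hv] at h
      simpa [dotProduct] using h
    set x : Fin n → ℝ := fun p => (u p^2 + v p^2)/2 with hxdef
    have hx0 : ∀ p, 0 ≤ x p := fun p => by rw [hxdef]; positivity
    have hx1 : ∑ p, x p = 1 := by
      simp only [hxdef]
      rw [← Finset.sum_div, Finset.sum_add_distrib, hu, hv]
      norm_num
    have hms := ms G a b hab hinj (suppF x).card x le_rfl hx0 hx1
    have hβ2 : ∀ k, (u ⬝ᵥ (E k).mulVec v)^2 ≤ x (a k) * x (b k) := by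
      intro k
      rw [hβ u v k, hxdef]
      simp only
      nlinarith [sq_nonneg (u (a k) * u (b k) - v (a k) * v (b k))]
    have hsumβ : ∑ k, (u ⬝ᵥ (E k).mulVec v)^2 ≤ ∑ k, x (a k) * x (b k) :=
      Finset.sum_le_sum fun k _ => hβ2 k
    have hfirst : (ℓ:ℝ) * ((ℓ:ℝ)⁻¹ * (u ⬝ᵥ v))^2 ≤ 1/(ℓ:ℝ) := by
      have h3 : (ℓ:ℝ) * ((ℓ:ℝ)⁻¹ * (u ⬝ᵥ v))^2 = (u ⬝ᵥ v)^2/(ℓ:ℝ) := by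
        field_simp
      rw [h3, div_le_div_iff₀ hℓR hℓR]
      nlinarith [hd2, hℓR]
    have hc2 : ∑ j, cfun u v j ^ 2 ≤ R := by
      rw [hc2split u v, hRdef]
      linarith
    rcases le_or_gt (∑ j, cfun u v j * w j) 0 with h0 | h0
    · exact h0.trans (Real.sqrt_nonneg R)
    · exact (Real.le_sqrt h0.le hRpos.le).2 (hCS.trans hc2)
  · -- T = 1 ↔ ℓ = ω
    rw [Real.sqrt_eq_one]
    constructor
    · intro h
      have h1 : 1/(ℓ:ℝ) = 1/(G.cliqueNum:ℝ) := by rw [hRdef] at h; linarith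
      rw [div_eq_div_iff hℓR.ne' hωR.ne', one_mul, one_mul] at h1
      exact_mod_cast h1.symm
    · intro h
      rw [hRdef, h]; ring
  · -- 1 < T ↔ ℓ < ω
    rw [Real.lt_sqrt (by norm_num : (0:ℝ) ≤ 1), one_pow]
    constructor
    · intro h
      have h1 : 1/(G.cliqueNum:ℝ) < 1/(ℓ:ℝ) := by rw [hRdef] at h; linarith
      rw [div_lt_div_iff₀ hωR hℓR, one_mul, one_mul] at h1
      exact_mod_cast h1
    · intro h
      have h1 : (ℓ:ℝ) < (G.cliqueNum:ℝ) := by exact_mod_cast h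
      have h2 : 1/(G.cliqueNum:ℝ) < 1/(ℓ:ℝ) := by
        rw [div_lt_div_iff₀ hωR hℓR, one_mul, one_mul]; exact h1
      rw [hRdef]; linarith
  · -- T < 1 ↔ ω < ℓ
    rw [Real.sqrt_lt' (by norm_num : (0:ℝ) < 1), one_pow]
    constructor
    · intro h
      have h1 : 1/(ℓ:ℝ) < 1/(G.cliqueNum:ℝ) := by rw [hRdef] at h; linarith
      rw [div_lt_div_iff₀ hℓR hωR, one_mul, one_mul] at h1
      exact_mod_cast h1
    · intro h
      have h1 : (G.cliqueNum:ℝ) < (ℓ:ℝ) := by exact_mod_cast h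
      have h2 : 1/(ℓ:ℝ) < 1/(G.cliqueNum:ℝ) := by
        rw [div_lt_div_iff₀ hℓR hωR, one_mul, one_mul]; exact h1
      rw [hRdef]; linarith
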